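/- Let b ≥ 2 be an integer, X ∈ ℝ^{N×(Kg)} a matrix whose columns are partitioned into K contiguous groups of size g with submatrices X^{(k)} ∈ ℝ^{N×g}, and w ∈ ℝ^{Kg} a vector partitioned into subvectors w^{(k)} ∈ ℝ^g, each with ‖w^{(k)}‖_∞ > 0. Let Q_g(w) denote the group-wise symmetric uniform quantization of w, obtained by applying symmetric uniform quantization with bit-width b and scale s_k = ‖w^{(k)}‖_∞/(2^{b−1} − 1) independently on each group. Then ‖X w − X Q_g(w)‖_2 ≤ (√g / (2(2^{b−1} − 1))) · Σ_{k=1}^{K} ‖X^{(k)}‖_F · ‖w^{(k)}‖_∞. -/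

import Mathlib

/-- Let `b ≥ 2`, `X ∈ ℝ^{N×(K·g)}` with columns partitioned into `K` groups of size `g`
(columns indexed by `Fin K × Fin g`), and `w ∈ ℝ^{K·g}` partitioned into group subvectors
`w^(k) = fun j => w (k, j)`, each with `‖w^(k)‖_∞ > 0` (sup norm on `Fin g → ℝ`). Let `Qw`
be the group-wise symmetric uniform quantization of `w` with bit-width `b` and per-group
scale `s k = ‖w^(k)‖_∞ / (2^(b-1) - 1)`. Then
`‖X w - X Qw‖₂ ≤ (√g / (2 (2^(b-1) - 1))) Σ_k ‖X^(k)‖_F ‖w^(k)‖_∞`. -/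
theorem groupwise_quantization_matvec_error_bound
    (N K g b : ℕ) (hb : 2 ≤ b)
    (X : Matrix (Fin N) (Fin K × Fin g) ℝ)
    (w : Fin K × Fin g → ℝ)
    (hw : ∀ k : Fin K, 0 < ‖(fun j : Fin g => w (k, j))‖)
    (s : Fin K → ℝ)
    (hs : ∀ k, s k = ‖(fun j : Fin g => w (k, j))‖ / (2 ^ (b - 1) - 1))
    (Qw : Fin K × Fin g → ℝ)
    (hQ : ∀ (k : Fin K) (j : Fin g),
      Qw (k, j) = s k *
        ((min (max (round (w (k, j) / s k)) (-(2 ^ (b - 1)) : ℤ)) ((2 ^ (b - 1) - 1 : ℤ)) : ℤ) : ℝ)) :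
    Real.sqrt (∑ n, (X.mulVec w n - X.mulVec Qw n) ^ 2) ≤
      Real.sqrt g / (2 * ((2 : ℝ) ^ (b - 1) - 1)) *
        ∑ k : Fin K,
          Real.sqrt (∑ n, ∑ j, (X n (k, j)) ^ 2) * ‖(fun j : Fin g => w (k, j))‖ := by
  classical
  -- notation
  set M : ℝ := (2 : ℝ) ^ (b - 1) - 1 with hMdef
  have hb1 : 1 ≤ b - 1 := by omega
  have hM1 : (1 : ℝ) ≤ M := by
    have h2 : (2 : ℝ) ^ 1 ≤ (2 : ℝ) ^ (b - 1) :=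
      pow_le_pow_right₀ one_le_two hb1
    simp only [pow_one] at h2
    simp only [hMdef]; linarith
  have hMpos : (0 : ℝ) < M := by linarith
  have hMcast : ((2 ^ (b - 1) - 1 : ℤ) : ℝ) = M := by push_cast [hMdef]; ring
  have hspos : ∀ k, 0 < s k := by
    intro k; rw [hs k]; exact div_pos (hw k) hMpos
  -- pointwise quantization error
  have herr : ∀ k j, |w (k, j) - Qw (k, j)| ≤ s k / 2 := by
    intro k j
    have hsk := hspos k
    have hwle : |w (k, j)| ≤ ‖(fun j : Fin g => w (k, j))‖ := by
      simpa using norm_le_pi_norm (fun j : Fin g => w (k, j)) j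
    have hsM : s k * M = ‖(fun j : Fin g => w (k, j))‖ := by
      rw [hs k]; field_simp
    have hx : |w (k, j) / s k| ≤ M := by
      rw [abs_div, abs_of_pos hsk, div_le_iff₀ hsk]
      rw [mul_comm, hsM]; exact hwle
    obtain ⟨hx1, hx2⟩ := abs_le.mp hx
    have hmono : ∀ x y : ℝ, x ≤ y → round x ≤ round y := by
      intro x y hxy
      rw [round_eq, round_eq]
      exact Int.floor_le_floor (by linarith)
    have hr1 : round (w (k, j) / s k) ≤ (2 ^ (b - 1) - 1 : ℤ) := by
      have h := hmono (w (k, j) / s k) ((2 ^ (b - 1) - 1 : ℤ) : ℝ) (by rw [hMcast]; exact hx2)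
      rwa [round_intCast] at h
    have hr2 : (-(2 ^ (b - 1)) : ℤ) ≤ round (w (k, j) / s k) := by
      have h := hmono (((-(2 ^ (b - 1) - 1) : ℤ)) : ℝ) (w (k, j) / s k)
        (by push_cast; rw [← hMcast] at hx1; push_cast at hx1 ⊢; linarith)
      rw [round_intCast] at h
      omega
    have hQ' : Qw (k, j) = s k * (round (w (k, j) / s k) : ℝ) := by
      rw [hQ k j, max_eq_left hr2, min_eq_left hr1]
    have habs := abs_sub_round (w (k, j) / s k)
    have hw_eq : w (k, j) = s k * (w (k, j) / s k) := by field_simp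
    calc |w (k, j) - Qw (k, j)|
        = |s k| * |w (k, j) / s k - (round (w (k, j) / s k) : ℝ)| := by
          rw [hQ', ← abs_mul]; congr 1; rw [mul_sub, ← hw_eq]
      _ ≤ s k * (1 / 2) := by
          rw [abs_of_pos hsk]
          exact mul_le_mul_of_nonneg_left habs hsk.le
      _ = s k / 2 := by ring
  -- error vectors per group, in EuclideanSpace
  set E : Fin K × Fin g → ℝ := fun p => w p - Qw p with hE
  set v : Fin K → EuclideanSpace ℝ (Fin N) :=
    fun k => WithLp.toLp 2 (fun n => ∑ j, X n (k, j) * E (k, j)) with hv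
  have hsum : ∀ n, X.mulVec w n - X.mulVec Qw n = ∑ k, v k n := by
    intro n
    simp only [Matrix.mulVec, dotProduct, hv, hE, PiLp.toLp_apply]
    rw [← Finset.sum_sub_distrib, Fintype.sum_prod_type]
    exact Finset.sum_congr rfl fun k _ => Finset.sum_congr rfl fun j _ => by ring
  -- LHS as a norm
  have hLHS : Real.sqrt (∑ n, (X.mulVec w n - X.mulVec Qw n) ^ 2) = ‖∑ k, v k‖ := by
    rw [EuclideanSpace.norm_eq]
    congr 1
    refine Finset.sum_congr rfl fun n _ => ?_
    rw [hsum n]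
    have h2 : (∑ k, v k) n = ∑ k, v k n := by rw [WithLp.ofLp_sum]; exact Finset.sum_apply n Finset.univ (fun k => (v k).ofLp)
    rw [h2]; simp [Real.norm_eq_abs, sq_abs]
  rw [hLHS]
  -- per-group norm bound
  have hvk : ∀ k, ‖v k‖ ≤
      Real.sqrt g / (2 * M) * (Real.sqrt (∑ n, ∑ j, (X n (k, j)) ^ 2) *
        ‖(fun j : Fin g => w (k, j))‖) := by
    intro k
    have hsk := hspos k
    have hEk : ∀ j, (E (k, j)) ^ 2 ≤ (s k / 2) ^ 2 := by
      intro j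
      have := herr k j
      have h2 : |E (k, j)| ≤ s k / 2 := this
      calc (E (k, j)) ^ 2 = |E (k, j)| ^ 2 := (sq_abs _).symm
        _ ≤ (s k / 2) ^ 2 := by
            apply pow_le_pow_left₀ (abs_nonneg _) h2
    have hrow : ∀ n, (v k n) ^ 2 ≤ (∑ j, (X n (k, j)) ^ 2) * (g * (s k / 2) ^ 2) := by
      intro n
      have hcs := Finset.sum_mul_sq_le_sq_mul_sq Finset.univ
        (fun j => X n (k, j)) (fun j => E (k, j))
      have hE2 : (∑ j, (E (k, j)) ^ 2) ≤ g * (s k / 2) ^ 2 := by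
        calc (∑ j, (E (k, j)) ^ 2) ≤ ∑ _j : Fin g, (s k / 2) ^ 2 :=
              Finset.sum_le_sum fun j _ => hEk j
          _ = g * (s k / 2) ^ 2 := by simp [mul_comm]
      calc (v k n) ^ 2 = (∑ j, X n (k, j) * E (k, j)) ^ 2 := rfl
        _ ≤ (∑ j, (X n (k, j)) ^ 2) * (∑ j, (E (k, j)) ^ 2) := hcs
        _ ≤ (∑ j, (X n (k, j)) ^ 2) * (g * (s k / 2) ^ 2) := by
            apply mul_le_mul_of_nonneg_left hE2
            positivity
    have hnorm2 : ‖v k‖ ^ 2 ≤ (∑ n, ∑ j, (X n (k, j)) ^ 2) * (g * (s k / 2) ^ 2) := by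
      rw [EuclideanSpace.norm_eq, Real.sq_sqrt (by positivity)]
      calc (∑ n, ‖v k n‖ ^ 2) = ∑ n, (v k n) ^ 2 := by
            refine Finset.sum_congr rfl fun n _ => ?_; simp [Real.norm_eq_abs, sq_abs]
        _ ≤ ∑ n, (∑ j, (X n (k, j)) ^ 2) * (g * (s k / 2) ^ 2) :=
            Finset.sum_le_sum fun n _ => hrow n
        _ = (∑ n, ∑ j, (X n (k, j)) ^ 2) * (g * (s k / 2) ^ 2) := by
            rw [← Finset.sum_mul]
    have hnn : (0:ℝ) ≤ ‖v k‖ := norm_nonneg _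
    have h1 : ‖v k‖ ≤ Real.sqrt ((∑ n, ∑ j, (X n (k, j)) ^ 2) * (g * (s k / 2) ^ 2)) := by
      rw [← Real.sqrt_sq hnn]
      exact Real.sqrt_le_sqrt hnorm2
    refine h1.trans_eq ?_
    rw [Real.sqrt_mul (by positivity), Real.sqrt_mul (by positivity : (0:ℝ) ≤ (g:ℝ)),
      Real.sqrt_sq (by positivity)]
    rw [hs k]
    field_simp
  calc ‖∑ k, v k‖ ≤ ∑ k, ‖v k‖ := norm_sum_le _ _
    _ ≤ ∑ k, Real.sqrt g / (2 * M) * (Real.sqrt (∑ n, ∑ j, (X n (k, j)) ^ 2) *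
          ‖(fun j : Fin g => w (k, j))‖) := Finset.sum_le_sum fun k _ => hvk k
    _ = Real.sqrt g / (2 * M) * ∑ k, Real.sqrt (∑ n, ∑ j, (X n (k, j)) ^ 2) *
          ‖(fun j : Fin g => w (k, j))‖ := by rw [Finset.mul_sum]
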